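/- arXiv:2507.21528 — 3 statements merged into one kernel-verified Lean document; each statement's English description precedes it below -/
import Mathlib

section
/- Let N be a positive integer, ε a primitive N-th root of unity, and let the cyclic group G of order N act on the polynomial ring ℂ[x,y] by g·x = εx and g·y = ε⁻¹y. Then the subring of G-invariants ℂ[x,y]^G equals the ℂ-subalgebra generated by x^N, y^N, and xy. -/
open MvPolynomial

lemma monomial_eq_two (m : Fin 2 →₀ ℕ) (c : ℂ) :
    (monomial m c : MvPolynomial (Fin 2) ℂ) = C c * X 0 ^ m 0 * X 1 ^ m 1 := by
  rw [monomial_eq, Finsupp.prod_fintype _ _ (fun i => pow_zero _), Fin.prod_univ_two, mul_assoc]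

lemma aeval_monomial_two (a b : ℂ) (m : Fin 2 →₀ ℕ) (c : ℂ) :
    aeval ![C a * X 0, C b * X 1] (monomial m c : MvPolynomial (Fin 2) ℂ)
      = monomial m (a ^ m 0 * b ^ m 1 * c) := by
  rw [monomial_eq_two, monomial_eq_two]
  simp only [map_mul, map_pow, aeval_X, aeval_C]
  show C c * (C a * X 0) ^ m 0 * (C b * X 1) ^ m 1 = _
  rw [mul_pow, mul_pow, ← C_pow, ← C_pow]
  ring

lemma coeff_aeval_two (a b : ℂ) (p : MvPolynomial (Fin 2) ℂ) (m : Fin 2 →₀ ℕ) :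
    coeff m (aeval ![C a * X 0, C b * X 1] p) = a ^ m 0 * b ^ m 1 * coeff m p := by
  conv_lhs => rw [p.as_sum, map_sum]
  simp only [aeval_monomial_two]
  rw [coeff_sum]
  simp only [coeff_monomial]
  rw [Finset.sum_ite_eq' p.support m]
  split_ifs with h
  · rfl
  · rw [notMem_support_iff.mp h, mul_zero]

lemma monomial_mem_adjoin (N : ℕ) (hN : 0 < N) (m : Fin 2 →₀ ℕ) (c : ℂ)
    (h : m 0 ≡ m 1 [MOD N]) :
    (monomial m c : MvPolynomial (Fin 2) ℂ) ∈
      Algebra.adjoin ℂ ({X 0 ^ N, X 1 ^ N, X 0 * X 1} : Set (MvPolynomial (Fin 2) ℂ)) := by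
  set A := Algebra.adjoin ℂ ({X 0 ^ N, X 1 ^ N, X 0 * X 1} : Set (MvPolynomial (Fin 2) ℂ))
  have hx : (X 0 ^ N : MvPolynomial (Fin 2) ℂ) ∈ A :=
    Algebra.subset_adjoin (by simp)
  have hy : (X 1 ^ N : MvPolynomial (Fin 2) ℂ) ∈ A :=
    Algebra.subset_adjoin (by simp)
  have hxy : (X 0 * X 1 : MvPolynomial (Fin 2) ℂ) ∈ A :=
    Algebra.subset_adjoin (by simp)
  rw [monomial_eq_two]
  rcases le_total (m 1) (m 0) with hle | hle
  · obtain ⟨k, hk⟩ := (Nat.modEq_iff_dvd' hle).mp h.symm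
    have : (C c * X 0 ^ m 0 * X 1 ^ m 1 : MvPolynomial (Fin 2) ℂ)
        = C c * (X 0 * X 1) ^ m 1 * (X 0 ^ N) ^ k := by
      rw [← pow_mul, mul_pow]
      have : m 0 = m 1 + N * k := by omega
      rw [this, pow_add]
      ring
    rw [this]
    exact mul_mem (mul_mem (A.algebraMap_mem c) (pow_mem hxy _)) (pow_mem hx _)
  · obtain ⟨k, hk⟩ := (Nat.modEq_iff_dvd' hle).mp h
    have : (C c * X 0 ^ m 0 * X 1 ^ m 1 : MvPolynomial (Fin 2) ℂ)
        = C c * (X 0 * X 1) ^ m 0 * (X 1 ^ N) ^ k := by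
      rw [← pow_mul, mul_pow]
      have : m 1 = m 0 + N * k := by omega
      rw [this, pow_add]
      ring
    rw [this]
    exact mul_mem (mul_mem (A.algebraMap_mem c) (pow_mem hxy _)) (pow_mem hy _)

/-- The invariants of `ℂ[x,y]` under the cyclic group of order `N` acting by
`x ↦ εx`, `y ↦ ε⁻¹y` (for `ε` a primitive `N`-th root of unity) form the
subalgebra generated by `x^N`, `y^N` and `xy`. -/
theorem invariants_eq_adjoin (N : ℕ) (hN : 0 < N) (ε : ℂ) (hε : IsPrimitiveRoot ε N) :
    {p : MvPolynomial (Fin 2) ℂ |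
        aeval ![C ε * X 0, C ε⁻¹ * X 1] p = p}
      = ↑(Algebra.adjoin ℂ
          ({X 0 ^ N, X 1 ^ N, X 0 * X 1} : Set (MvPolynomial (Fin 2) ℂ))) := by
  have hε0 : ε ≠ 0 := hε.ne_zero hN.ne'
  have hεN : ε ^ N = 1 := hε.pow_eq_one
  have hεiN : (ε⁻¹) ^ N = 1 := by
    rw [inv_pow, hεN, inv_one]
  ext p
  simp only [Set.mem_setOf_eq, SetLike.mem_coe]
  constructor
  · intro hp
    rw [p.as_sum]
    refine Subalgebra.sum_mem _ (fun m hm => monomial_mem_adjoin N hN m _ ?_)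
    have hc : ε ^ m 0 * (ε⁻¹) ^ m 1 * coeff m p = coeff m p := by
      rw [← coeff_aeval_two, hp]
    have hne : coeff m p ≠ 0 := mem_support_iff.mp hm
    have h1 : ε ^ m 0 * (ε⁻¹) ^ m 1 = 1 :=
      mul_right_cancel₀ hne (hc.trans (one_mul _).symm)
    have h2 : ε ^ m 0 = ε ^ m 1 := by
      rw [inv_pow, mul_inv_eq_one₀ (pow_ne_zero _ hε0)] at h1
      exact h1
    rcases le_total (m 1) (m 0) with hle | hle
    · have h3 : ε ^ (m 0 - m 1) = 1 := by
        have h4 := h2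
        rw [← Nat.sub_add_cancel hle, pow_add] at h4
        exact mul_right_cancel₀ (pow_ne_zero _ hε0) (h4.trans (one_mul _).symm)
      exact ((Nat.modEq_iff_dvd' hle).mpr (hε.pow_eq_one_iff_dvd _ |>.mp h3)).symm
    · have h3 : ε ^ (m 1 - m 0) = 1 := by
        have h4 := h2.symm
        rw [← Nat.sub_add_cancel hle, pow_add] at h4
        exact mul_right_cancel₀ (pow_ne_zero _ hε0) (h4.trans (one_mul _).symm)
      exact (Nat.modEq_iff_dvd' hle).mpr (hε.pow_eq_one_iff_dvd _ |>.mp h3)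
  · intro hp
    induction hp using Algebra.adjoin_induction with
    | mem q hq =>
      rcases hq with h | h | h
      · subst h
        simp only [map_pow, aeval_X, Matrix.cons_val_zero, mul_pow, ← C_pow, hεN, C_1, one_mul]
      · subst h
        simp only [map_pow, aeval_X, Matrix.cons_val_one, Matrix.head_cons, Matrix.cons_val_zero, mul_pow, ← C_pow,
          hεiN, C_1, one_mul]
      · subst h
        rw [map_mul, aeval_X, aeval_X]
        simp only [Matrix.cons_val_zero, Matrix.cons_val_one, Matrix.head_cons]
        rw [mul_mul_mul_comm, ← C_mul, mul_inv_cancel₀ hε0, C_1, one_mul]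
    | algebraMap c => simp
    | add q r _ _ hq hr => rw [map_add, hq, hr]
    | mul q r _ _ hq hr => rw [map_mul, hq, hr]
end

section
/- Let Q be the submonoid of ℕ² generated by (N,0), (0,N), and (1,1), where N is a positive integer. Then the monoid algebra ℂ[Q] is isomorphic as a ℂ-algebra to ℂ[x,y,z]/(xy - z^N). -/
open MvPolynomial

namespace MonAlgIsoAux

noncomputable section

variable (N : ℕ)

abbrev Q : AddSubmonoid (ℕ × ℕ) := AddSubmonoid.closure ({(N, 0), (0, N), (1, 1)} : Set (ℕ × ℕ))

abbrev R : Type := MvPolynomial (Fin 3) ℂ ⧸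
    Ideal.span ({X 0 * X 1 - X 2 ^ N} : Set (MvPolynomial (Fin 3) ℂ))

def u : R N := Ideal.Quotient.mk _ (X 0)
def v : R N := Ideal.Quotient.mk _ (X 1)
def w : R N := Ideal.Quotient.mk _ (X 2)

lemma huv : u N * v N = w N ^ N := by
  rw [u, v, w, ← map_mul, ← map_pow, Ideal.Quotient.eq]
  exact Ideal.subset_span rfl

lemma mem_mod (q : ℕ × ℕ) (hq : q ∈ Q N) : q.1 % N = q.2 % N := by
  induction hq using AddSubmonoid.closure_induction with
  | mem x hx =>
    rcases hx with h | h | h <;> subst h <;> simp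
  | zero => rfl
  | add x y hx hy ihx ihy =>
    show (x.1 + y.1) % N = (x.2 + y.2) % N
    rw [Nat.add_mod, ihx, ihy, ← Nat.add_mod]

lemma pow_shift (a b c k : ℕ) :
    u N ^ (a + k) * v N ^ (b + k) * w N ^ c = u N ^ a * v N ^ b * w N ^ (c + k * N) := by
  have h := huv N
  calc u N ^ (a + k) * v N ^ (b + k) * w N ^ c
      = u N ^ a * v N ^ b * w N ^ c * (u N * v N) ^ k := by ring
    _ = u N ^ a * v N ^ b * w N ^ c * (w N ^ N) ^ k := by rw [h]
    _ = u N ^ a * v N ^ b * w N ^ (c + k * N) := by ring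

lemma monEq_le (hN : 0 < N) (a b c a' b' c' : ℕ) (hc : c ≤ c')
    (h1 : a * N + c = a' * N + c') (h2 : b * N + c = b' * N + c') :
    u N ^ a * v N ^ b * w N ^ c = u N ^ a' * v N ^ b' * w N ^ c' := by
  have hle : a' * N ≤ a * N := by linarith
  have ha' : a' ≤ a := Nat.le_of_mul_le_mul_right hle hN
  set k := a - a' with hk
  have ha : a = a' + k := by omega
  have hc' : c' = c + k * N := by
    rw [ha, add_mul] at h1; linarith
  have hbN : b * N = (b' + k) * N := by rw [add_mul]; linarith
  have hb : b = b' + k := Nat.eq_of_mul_eq_mul_right hN hbN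
  rw [ha, hb, hc']
  exact pow_shift N a' b' c k

lemma monEq (hN : 0 < N) (a b c a' b' c' : ℕ)
    (h1 : a * N + c = a' * N + c') (h2 : b * N + c = b' * N + c') :
    u N ^ a * v N ^ b * w N ^ c = u N ^ a' * v N ^ b' * w N ^ c' := by
  rcases le_total c c' with h | h
  · exact monEq_le N hN a b c a' b' c' h h1 h2
  · exact (monEq_le N hN a' b' c' a b c h h1.symm h2.symm).symm

/-- exponents for the monomial representative of a point of `Q`. -/
def ea (q : ℕ × ℕ) : ℕ := (q.1 - min q.1 q.2) / N
def eb (q : ℕ × ℕ) : ℕ := (q.2 - min q.1 q.2) / N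

lemma key (q : ℕ × ℕ) (hq : q ∈ Q N) :
    ea N q * N + min q.1 q.2 = q.1 ∧ eb N q * N + min q.1 q.2 = q.2 := by
  have hmod := mem_mod N q hq
  constructor
  · rcases le_total q.1 q.2 with h | h
    · rw [min_eq_left h, ea, min_eq_left h]
      simp
    · rw [min_eq_right h, ea, min_eq_right h]
      have hd : N ∣ q.1 - q.2 := (Nat.modEq_iff_dvd' h).mp hmod.symm
      rw [Nat.div_mul_cancel hd]
      omega
  · rcases le_total q.2 q.1 with h | h
    · rw [min_eq_right h, eb, min_eq_right h]
      simp
    · rw [min_eq_left h, eb, min_eq_left h]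
      have hd : N ∣ q.2 - q.1 := (Nat.modEq_iff_dvd' h).mp hmod
      rw [Nat.div_mul_cancel hd]
      omega

def e (q : ℕ × ℕ) : R N := u N ^ ea N q * v N ^ eb N q * w N ^ min q.1 q.2

def Fmon (hN : 0 < N) : Multiplicative (Q N) →* R N where
  toFun q := e N (Multiplicative.toAdd q).val
  map_one' := by
    show e N ((0 : Q N) : ℕ × ℕ) = 1
    simp [e, ea, eb]
  map_mul' p q := by
    show e N ((Multiplicative.toAdd p).val + (Multiplicative.toAdd q).val) = _
    set x := (Multiplicative.toAdd p) with hx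
    set y := (Multiplicative.toAdd q) with hy
    have kx := key N x.val x.2
    have ky := key N y.val y.2
    have kxy := key N (x.val + y.val) (x + y : Q N).2
    simp only [e]
    have : u N ^ ea N x.val * v N ^ eb N x.val * w N ^ min x.val.1 x.val.2 *
        (u N ^ ea N y.val * v N ^ eb N y.val * w N ^ min y.val.1 y.val.2) =
        u N ^ (ea N x.val + ea N y.val) * v N ^ (eb N x.val + eb N y.val) *
          w N ^ (min x.val.1 x.val.2 + min y.val.1 y.val.2) := by ring
    rw [this]
    apply monEq N hN
    · have h : ((x.val + y.val).1 : ℕ) = x.val.1 + y.val.1 := rfl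
      rw [add_mul]
      omega
    · have h : ((x.val + y.val).2 : ℕ) = x.val.2 + y.val.2 := rfl
      rw [add_mul]
      omega

def g0 (hN : 0 < N) : Q N := ⟨(N, 0), AddSubmonoid.subset_closure (by simp)⟩
def g1 (hN : 0 < N) : Q N := ⟨(0, N), AddSubmonoid.subset_closure (by simp)⟩
def g2 (hN : 0 < N) : Q N := ⟨(1, 1), AddSubmonoid.subset_closure (by simp)⟩

def φ (hN : 0 < N) : MvPolynomial (Fin 3) ℂ →ₐ[ℂ] AddMonoidAlgebra ℂ (Q N) :=
  aeval ![AddMonoidAlgebra.single (g0 N hN) 1, AddMonoidAlgebra.single (g1 N hN) 1,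
    AddMonoidAlgebra.single (g2 N hN) 1]

lemma φ_rel (hN : 0 < N) : φ N hN (X 0 * X 1 - X 2 ^ N) = 0 := by
  rw [map_sub, map_mul, map_pow, φ, aeval_X, aeval_X, aeval_X]
  show AddMonoidAlgebra.single (g0 N hN) 1 * AddMonoidAlgebra.single (g1 N hN) 1 -
      AddMonoidAlgebra.single (g2 N hN) 1 ^ N = 0
  rw [AddMonoidAlgebra.single_mul_single, AddMonoidAlgebra.single_pow, sub_eq_zero]
  congr 1
  · ext : 1
    show ((N, 0) : ℕ × ℕ) + (0, N) = N • ((1, 1) : ℕ × ℕ)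
    simp [Prod.ext_iff]
  · simp

def φbar (hN : 0 < N) : R N →ₐ[ℂ] AddMonoidAlgebra ℂ (Q N) :=
  Ideal.Quotient.liftₐ _ (φ N hN) (by
    intro a ha
    rw [Ideal.mem_span_singleton] at ha
    obtain ⟨c, rfl⟩ := ha
    rw [map_mul, φ_rel, zero_mul])

def ψ (hN : 0 < N) : AddMonoidAlgebra ℂ (Q N) →ₐ[ℂ] R N :=
  AddMonoidAlgebra.lift ℂ (R N) (Q N) (Fmon N hN)

lemma comp1 (hN : 0 < N) : (ψ N hN).comp (φbar N hN) = AlgHom.id ℂ (R N) := by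
  apply Ideal.Quotient.algHom_ext
  apply MvPolynomial.algHom_ext
  intro i
  fin_cases i <;>
  · simp only [AlgHom.comp_apply, Ideal.Quotient.mkₐ_eq_mk, AlgHom.id_apply]
    rw [φbar]
    erw [Ideal.Quotient.liftₐ_apply, Ideal.Quotient.lift_mk]
    rw [φ]
    erw [aeval_X]
    rw [ψ]
    erw [AddMonoidAlgebra.lift_single]
    rw [one_smul]
    show e N _ = _
    simp [e, ea, eb, g0, g1, g2, Nat.div_self hN, u, v, w]

lemma comp2 (hN : 0 < N) :
    (φbar N hN).comp (ψ N hN) = AlgHom.id ℂ (AddMonoidAlgebra ℂ (Q N)) := by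
  refine AddMonoidAlgebra.algHom_ext ?_ (Subsingleton.elim _ _)
  intro q
  simp only [AlgHom.comp_apply, AlgHom.id_apply]
  rw [ψ]
  erw [AddMonoidAlgebra.lift_single]
  rw [one_smul]
  show φbar N hN (e N q.val) = _
  have kq := key N q.val q.2
  rw [e, map_mul, map_mul, map_pow, map_pow, map_pow]
  have hu : φbar N hN (u N) = AddMonoidAlgebra.single (g0 N hN) 1 := by
    rw [φbar, u]
    erw [Ideal.Quotient.liftₐ_apply, Ideal.Quotient.lift_mk]
    rw [φ]; erw [aeval_X]; rfl
  have hv : φbar N hN (v N) = AddMonoidAlgebra.single (g1 N hN) 1 := by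
    rw [φbar, v]
    erw [Ideal.Quotient.liftₐ_apply, Ideal.Quotient.lift_mk]
    rw [φ]; erw [aeval_X]; rfl
  have hw : φbar N hN (w N) = AddMonoidAlgebra.single (g2 N hN) 1 := by
    rw [φbar, w]
    erw [Ideal.Quotient.liftₐ_apply, Ideal.Quotient.lift_mk]
    rw [φ]; erw [aeval_X]; rfl
  rw [hu, hv, hw, AddMonoidAlgebra.single_pow, AddMonoidAlgebra.single_pow,
    AddMonoidAlgebra.single_pow, AddMonoidAlgebra.single_mul_single,
    AddMonoidAlgebra.single_mul_single]
  simp only [one_pow, one_mul]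
  congr 1
  ext : 1
  show (ea N q.val) • ((N, 0) : ℕ × ℕ) + (eb N q.val) • ((0, N) : ℕ × ℕ)
      + (min q.val.1 q.val.2) • ((1, 1) : ℕ × ℕ) = q.val
  rw [Prod.ext_iff]
  simp only [Prod.fst_add, Prod.snd_add, Prod.smul_fst, Prod.smul_snd, smul_eq_mul]
  omega

end

end MonAlgIsoAux


/-- For `Q` the submonoid of `ℕ²` generated by `(N,0)`, `(0,N)` and `(1,1)`,
the monoid algebra `ℂ[Q]` is isomorphic as a `ℂ`-algebra to `ℂ[x,y,z]/(xy - z^N)`. -/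
theorem monoidAlgebra_iso_quotient (N : ℕ) (hN : 0 < N) :
    Nonempty
      (AddMonoidAlgebra ℂ
          (AddSubmonoid.closure ({(N, 0), (0, N), (1, 1)} : Set (ℕ × ℕ)))
        ≃ₐ[ℂ]
        (MvPolynomial (Fin 3) ℂ ⧸
          Ideal.span ({X 0 * X 1 - X 2 ^ N} : Set (MvPolynomial (Fin 3) ℂ)))) := by
  exact ⟨AlgEquiv.ofAlgHom (MonAlgIsoAux.ψ N hN) (MonAlgIsoAux.φbar N hN)
    (MonAlgIsoAux.comp1 N hN) (MonAlgIsoAux.comp2 N hN)⟩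
end

section
/- Let ε be a primitive N-th root of unity and let the cyclic group G of order N act on the polynomial ring ℂ[u,v] by g·u = εu, g·v = ε⁻¹v. Then ℂ[u,v]^G is isomorphic as a ℂ-algebra to ℂ[x,y,z]/(xy - z^N) via x ↦ u^N, y ↦ v^N, z ↦ uv. -/
open MvPolynomial

lemma phi_monomial (N : ℕ) (d : Fin 3 →₀ ℕ) (c : ℂ) :
    aeval ![(X 0 : MvPolynomial (Fin 2) ℂ) ^ N, X 1 ^ N, X 0 * X 1] (monomial d c)
      = monomial (Finsupp.single (0 : Fin 2) (N * d 0 + d 2) + Finsupp.single 1 (N * d 1 + d 2)) c := by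
  rw [aeval_monomial, Finsupp.prod_fintype _ _ (fun i => pow_zero _), Fin.prod_univ_three,
    monomial_eq, Finsupp.prod_fintype _ _ (fun i => pow_zero _), Fin.prod_univ_two]
  simp only [Matrix.cons_val_zero, Matrix.cons_val_one, Matrix.head_cons,
    Matrix.cons_val_two, Matrix.tail_cons, Finsupp.add_apply, Finsupp.single_apply,
    algebraMap_eq]
  norm_num
  left
  rw [mul_pow, ← pow_mul, ← pow_mul, pow_add, pow_add]
  ring

lemma sigma_monomial (ε : ℂ) (e : Fin 2 →₀ ℕ) (c : ℂ) :
    aeval ![C ε * (X 0 : MvPolynomial (Fin 2) ℂ), C ε⁻¹ * X 1] (monomial e c)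
      = monomial e (ε ^ e 0 * ε⁻¹ ^ e 1 * c) := by
  rw [aeval_monomial, Finsupp.prod_fintype _ _ (fun i => pow_zero _), Fin.prod_univ_two,
    monomial_eq, Finsupp.prod_fintype _ _ (fun i => pow_zero _), Fin.prod_univ_two]
  simp only [Matrix.cons_val_zero, Matrix.cons_val_one, Matrix.head_cons, mul_pow, ← C_pow,
    algebraMap_eq, map_mul]
  ring

noncomputable abbrev PQ (N : ℕ) := MvPolynomial (Fin 3) ℂ ⧸
    Ideal.span ({X 0 * X 1 - X 2 ^ N} : Set (MvPolynomial (Fin 3) ℂ))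

noncomputable def psi0 (N : ℕ) (e : Fin 2 →₀ ℕ) : PQ N :=
  if e 1 ≤ e 0 then
    Ideal.Quotient.mk _ (monomial (Finsupp.single (0 : Fin 3) ((e 0 - e 1) / N)
      + Finsupp.single 2 (e 1)) 1)
  else
    Ideal.Quotient.mk _ (monomial (Finsupp.single (1 : Fin 3) ((e 1 - e 0) / N)
      + Finsupp.single 2 (e 0)) 1)

noncomputable def psi (N : ℕ) (p : MvPolynomial (Fin 2) ℂ) : PQ N :=
  Finsupp.sum (AddMonoidAlgebra.coeff p) fun e c => c • psi0 N e

lemma quot_rel (N : ℕ) : (Ideal.Quotient.mk _ (X 0) : PQ N) * Ideal.Quotient.mk _ (X 1)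
    = Ideal.Quotient.mk _ (X 2) ^ N := by
  rw [← map_mul, ← map_pow, Ideal.Quotient.mk_eq_mk_iff_sub_mem]
  exact Ideal.subset_span rfl

lemma mk_monomial (N : ℕ) (d : Fin 3 →₀ ℕ) (c : ℂ) :
    (Ideal.Quotient.mk _ (monomial d c) : PQ N)
      = Ideal.Quotient.mk _ (C c) * Ideal.Quotient.mk _ (X 0) ^ d 0
        * Ideal.Quotient.mk _ (X 1) ^ d 1 * Ideal.Quotient.mk _ (X 2) ^ d 2 := by
  rw [monomial_eq, Finsupp.prod_fintype _ _ (fun i => pow_zero _), Fin.prod_univ_three]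
  push_cast [map_mul, map_pow]
  ring

lemma psi_smul_mono (N : ℕ) (e : Fin 2 →₀ ℕ) (c : ℂ) :
    psi N (monomial e c) = c • psi0 N e := by
  rw [psi, MvPolynomial.sum_monomial_eq (by simp)]

lemma psi_phi (N : ℕ) (hN : 0 < N) (p : MvPolynomial (Fin 3) ℂ) :
    psi N (aeval ![(X 0 : MvPolynomial (Fin 2) ℂ) ^ N, X 1 ^ N, X 0 * X 1] p)
      = Ideal.Quotient.mk _ p := by
  induction p using MvPolynomial.induction_on' with
  | add p q hp hq =>
    rw [map_add, map_add, ← hp, ← hq]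
    rw [psi, psi, psi, AddMonoidAlgebra.coeff_add]
    exact Finsupp.sum_add_index' (fun e => zero_smul ℂ _) (fun e c1 c2 => add_smul c1 c2 _)
  | monomial d c =>
    rw [phi_monomial, psi_smul_mono, psi0]
    have he0 : ((Finsupp.single (0 : Fin 2) (N * d 0 + d 2)
        + Finsupp.single (1 : Fin 2) (N * d 1 + d 2) : Fin 2 →₀ ℕ)) 0 = N * d 0 + d 2 := by simp
    have he1 : ((Finsupp.single (0 : Fin 2) (N * d 0 + d 2)
        + Finsupp.single (1 : Fin 2) (N * d 1 + d 2) : Fin 2 →₀ ℕ)) 1 = N * d 1 + d 2 := by simp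
    rw [he0, he1, mk_monomial]
    by_cases h : d 1 ≤ d 0
    · obtain ⟨k, hk⟩ := Nat.exists_eq_add_of_le h
      rw [if_pos (by have := mul_le_mul_right h N; omega : N * d 1 + d 2 ≤ N * d 0 + d 2)]
      have hsub : N * d 0 + d 2 - (N * d 1 + d 2) = N * k := by
        have : N * d 0 = N * d 1 + N * k := by rw [hk, Nat.mul_add]
        omega
      rw [hsub, Nat.mul_div_cancel_left k hN, mk_monomial]
      simp only [Finsupp.add_apply, Finsupp.single_apply]
      norm_num [Fin.ext_iff]
      have hs : ∀ z : PQ N, c • z = Ideal.Quotient.mk _ (C c) * z := fun z => Algebra.smul_def c z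
      rw [hs]
      have : (Ideal.Quotient.mk (Ideal.span {X 0 * X 1 - X 2 ^ N}) (X 0) : PQ N) ^ d 0
          * Ideal.Quotient.mk _ (X 1) ^ d 1
          = Ideal.Quotient.mk _ (X 0) ^ k * Ideal.Quotient.mk _ (X 2) ^ (N * d 1) := by
        have h2 : (Ideal.Quotient.mk (Ideal.span {X 0 * X 1 - X 2 ^ N}) (X 0) : PQ N) ^ d 1
            * Ideal.Quotient.mk _ (X 1) ^ d 1 = Ideal.Quotient.mk _ (X 2) ^ (N * d 1) := by
          rw [← mul_pow, quot_rel, ← pow_mul]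
        rw [hk, pow_add, mul_right_comm, h2]
        exact mul_comm _ _
      rw [mul_assoc _ _ (Ideal.Quotient.mk _ (X 1) ^ d 1), this, pow_add]
      ring
    · have hlt : d 0 < d 1 := not_le.1 h
      obtain ⟨k, hk⟩ := Nat.exists_eq_add_of_le hlt.le
      rw [if_neg (by have := mul_lt_mul_of_pos_left hlt hN; omega :
        ¬ (N * d 1 + d 2 ≤ N * d 0 + d 2))]
      have hsub : N * d 1 + d 2 - (N * d 0 + d 2) = N * k := by
        have : N * d 1 = N * d 0 + N * k := by rw [hk, Nat.mul_add]
        omega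
      rw [hsub, Nat.mul_div_cancel_left k hN, mk_monomial]
      simp only [Finsupp.add_apply, Finsupp.single_apply]
      norm_num [Fin.ext_iff]
      have hs : ∀ z : PQ N, c • z = Ideal.Quotient.mk _ (C c) * z := fun z => Algebra.smul_def c z
      rw [hs]
      have : (Ideal.Quotient.mk (Ideal.span {X 0 * X 1 - X 2 ^ N}) (X 0) : PQ N) ^ d 0
          * Ideal.Quotient.mk _ (X 1) ^ d 1
          = Ideal.Quotient.mk _ (X 1) ^ k * Ideal.Quotient.mk _ (X 2) ^ (N * d 0) := by
        have h2 : (Ideal.Quotient.mk (Ideal.span {X 0 * X 1 - X 2 ^ N}) (X 0) : PQ N) ^ d 0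
            * Ideal.Quotient.mk _ (X 1) ^ d 0 = Ideal.Quotient.mk _ (X 2) ^ (N * d 0) := by
          rw [← mul_pow, quot_rel, ← pow_mul]
        rw [hk, pow_add, ← mul_assoc, h2]
        exact mul_comm _ _
      rw [mk_monomial N d c, mul_assoc _ _ (Ideal.Quotient.mk _ (X 1) ^ d 1), this, pow_add]
      ring

lemma coeff_sigma (ε : ℂ) (p : MvPolynomial (Fin 2) ℂ) (e : Fin 2 →₀ ℕ) :
    coeff e (aeval ![C ε * X 0, C ε⁻¹ * X 1] p) = ε ^ e 0 * ε⁻¹ ^ e 1 * coeff e p := by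
  conv_lhs => rw [p.as_sum]
  rw [map_sum, coeff_sum]
  simp only [sigma_monomial, coeff_monomial]
  rw [Finset.sum_ite_eq' p.support e]
  by_cases he : e ∈ p.support
  · rw [if_pos he]
  · rw [if_neg he, notMem_support_iff.1 he, mul_zero]

lemma inv_mem_range (N : ℕ) (hN : 0 < N) (ε : ℂ) (hε : IsPrimitiveRoot ε N)
    (p : MvPolynomial (Fin 2) ℂ) (hp : aeval ![C ε * X 0, C ε⁻¹ * X 1] p = p) :
    p ∈ (aeval ![(X 0 : MvPolynomial (Fin 2) ℂ) ^ N, X 1 ^ N, X 0 * X 1] :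
      MvPolynomial (Fin 3) ℂ →ₐ[ℂ] MvPolynomial (Fin 2) ℂ).range := by
  have hεne : ε ≠ 0 := hε.ne_zero hN.ne'
  have hc : ε ^ (0 : ℕ) = 1 := pow_zero ε
  rw [← p.support_sum_monomial_coeff]
  apply Subalgebra.sum_mem
  intro e he
  have hcoeff : coeff e p ≠ 0 := mem_support_iff.1 he
  have h1 := coeff_sigma ε p e
  rw [hp] at h1
  have key : ε ^ e 0 * ε⁻¹ ^ e 1 = 1 :=
    mul_right_cancel₀ hcoeff (h1.symm.trans (one_mul _).symm)
  have hinvc : ε ^ e 1 * ε⁻¹ ^ e 1 = 1 := by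
    rw [← mul_pow, mul_inv_cancel₀ hεne, one_pow]
  by_cases hmn : e 1 ≤ e 0
  · have hpow : ε ^ (e 0 - e 1) = 1 := by
      calc ε ^ (e 0 - e 1) = ε ^ (e 0 - e 1) * (ε ^ e 1 * ε⁻¹ ^ e 1) := by rw [hinvc, mul_one]
      _ = ε ^ (e 0 - e 1) * ε ^ e 1 * ε⁻¹ ^ e 1 := by ring
      _ = ε ^ e 0 * ε⁻¹ ^ e 1 := by rw [← pow_add]; congr 2; omega
      _ = 1 := key
    obtain ⟨k, hk⟩ := hε.dvd_of_pow_eq_one _ hpow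
    apply (AlgHom.mem_range _).2
    refine ⟨monomial (Finsupp.single (0 : Fin 3) k + Finsupp.single 2 (e 1)) (coeff e p), ?_⟩
    rw [phi_monomial]
    have he0 : e 0 = N * k + e 1 := (Nat.sub_eq_iff_eq_add hmn).1 hk
    have hd0 : (Finsupp.single (0 : Fin 3) k + Finsupp.single 2 (e 1) : Fin 3 →₀ ℕ) 0 = k := by
      simp
    have hd1 : (Finsupp.single (0 : Fin 3) k + Finsupp.single 2 (e 1) : Fin 3 →₀ ℕ) 1 = 0 := by
      simp
    have hd2 : (Finsupp.single (0 : Fin 3) k + Finsupp.single 2 (e 1) : Fin 3 →₀ ℕ) 2 = e 1 := by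
      simp
    rw [hd0, hd1, hd2]
    have hexp : (Finsupp.single (0 : Fin 2) (N * k + e 1)
        + Finsupp.single (1 : Fin 2) (N * 0 + e 1) : Fin 2 →₀ ℕ) = e := by
      ext i
      fin_cases i <;> simp [Finsupp.single_apply, he0]
    rw [hexp]
  · have hmn' : e 0 ≤ e 1 := le_of_not_ge hmn
    have hpow : ε ^ (e 1 - e 0) = 1 := by
      have h2 : ε⁻¹ ^ (e 1 - e 0) = 1 := by
        calc ε⁻¹ ^ (e 1 - e 0) = (ε ^ e 0 * ε⁻¹ ^ e 0) * ε⁻¹ ^ (e 1 - e 0) := by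
              rw [← mul_pow, mul_inv_cancel₀ hεne, one_pow, one_mul]
        _ = ε ^ e 0 * (ε⁻¹ ^ e 0 * ε⁻¹ ^ (e 1 - e 0)) := by ring
        _ = ε ^ e 0 * ε⁻¹ ^ e 1 := by rw [← pow_add]; congr 2; omega
        _ = 1 := key
      rw [inv_pow, inv_eq_one] at h2
      exact h2
    obtain ⟨k, hk⟩ := hε.dvd_of_pow_eq_one _ hpow
    apply (AlgHom.mem_range _).2
    refine ⟨monomial (Finsupp.single (1 : Fin 3) k + Finsupp.single 2 (e 0)) (coeff e p), ?_⟩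
    rw [phi_monomial]
    have he1 : e 1 = N * k + e 0 := (Nat.sub_eq_iff_eq_add hmn').1 hk
    have hd0 : (Finsupp.single (1 : Fin 3) k + Finsupp.single 2 (e 0) : Fin 3 →₀ ℕ) 0 = 0 := by
      simp
    have hd1 : (Finsupp.single (1 : Fin 3) k + Finsupp.single 2 (e 0) : Fin 3 →₀ ℕ) 1 = k := by
      simp
    have hd2 : (Finsupp.single (1 : Fin 3) k + Finsupp.single 2 (e 0) : Fin 3 →₀ ℕ) 2 = e 0 := by
      simp
    rw [hd0, hd1, hd2]
    have hexp : (Finsupp.single (0 : Fin 2) (N * 0 + e 0)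
        + Finsupp.single (1 : Fin 2) (N * k + e 0) : Fin 2 →₀ ℕ) = e := by
      ext i
      fin_cases i <;> simp [Finsupp.single_apply, he1]
    rw [hexp]

/-- For `ε` a primitive `N`-th root of unity and the cyclic group of order `N` acting on
`ℂ[u,v]` by `u ↦ εu`, `v ↦ ε⁻¹v`, the invariant ring `ℂ[u,v]^G` is isomorphic to
`ℂ[x,y,z]/(xy - z^N)` via `x ↦ u^N`, `y ↦ v^N`, `z ↦ uv`. -/
theorem quotient_iso_invariants (N : ℕ) (hN : 0 < N) (ε : ℂ) (hε : IsPrimitiveRoot ε N) :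
    ∃ e : (MvPolynomial (Fin 3) ℂ ⧸
            Ideal.span ({X 0 * X 1 - X 2 ^ N} : Set (MvPolynomial (Fin 3) ℂ)))
          ≃ₐ[ℂ]
          (AlgHom.equalizer
            (aeval ![C ε * X 0, C ε⁻¹ * X 1] :
              MvPolynomial (Fin 2) ℂ →ₐ[ℂ] MvPolynomial (Fin 2) ℂ)
            (AlgHom.id ℂ (MvPolynomial (Fin 2) ℂ))),
      ((e (Ideal.Quotient.mk _ (X 0)) : MvPolynomial (Fin 2) ℂ) = X 0 ^ N)
      ∧ ((e (Ideal.Quotient.mk _ (X 1)) : MvPolynomial (Fin 2) ℂ) = X 1 ^ N)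
      ∧ ((e (Ideal.Quotient.mk _ (X 2)) : MvPolynomial (Fin 2) ℂ) = X 0 * X 1) := by
  have hεne : ε ≠ 0 := hε.ne_zero hN.ne'
  set σ : MvPolynomial (Fin 2) ℂ →ₐ[ℂ] MvPolynomial (Fin 2) ℂ :=
    aeval ![C ε * X 0, C ε⁻¹ * X 1] with hσ
  set φ : MvPolynomial (Fin 3) ℂ →ₐ[ℂ] MvPolynomial (Fin 2) ℂ :=
    aeval ![(X 0 : MvPolynomial (Fin 2) ℂ) ^ N, X 1 ^ N, X 0 * X 1] with hφ
  have hcomp : σ.comp φ = φ := by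
    apply MvPolynomial.algHom_ext
    intro i
    rw [AlgHom.comp_apply, hφ, aeval_X]
    fin_cases i
    · show σ (X 0 ^ N) = X 0 ^ N
      rw [map_pow, hσ, aeval_X, Matrix.cons_val_zero, mul_pow, ← C_pow, hε.pow_eq_one, C_1,
        one_mul]
    · show σ (X 1 ^ N) = X 1 ^ N
      rw [map_pow, hσ, aeval_X, Matrix.cons_val_one, Matrix.cons_val_zero, mul_pow, ← C_pow,
        inv_pow, hε.pow_eq_one, inv_one, C_1, one_mul]
    · show σ (X 0 * X 1) = X 0 * X 1
      rw [map_mul, hσ, aeval_X, aeval_X, Matrix.cons_val_zero, Matrix.cons_val_one,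
        Matrix.cons_val_zero, mul_mul_mul_comm, ← map_mul, mul_inv_cancel₀ hεne, C_1, one_mul]
  have hmem : ∀ p, φ p ∈ AlgHom.equalizer σ (AlgHom.id ℂ (MvPolynomial (Fin 2) ℂ)) := by
    intro p
    rw [AlgHom.mem_equalizer]
    show σ (φ p) = φ p
    rw [← AlgHom.comp_apply, hcomp]
  set φ' := φ.codRestrict _ hmem with hφ'
  have hker : ∀ a ∈ Ideal.span ({X 0 * X 1 - X 2 ^ N} : Set (MvPolynomial (Fin 3) ℂ)),
      φ' a = 0 := by
    intro a ha
    apply Subtype.ext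
    show φ a = 0
    have : a ∈ RingHom.ker φ.toRingHom := by
      refine Ideal.span_le.2 ?_ ha
      intro r hr
      rw [Set.mem_singleton_iff] at hr
      subst hr
      rw [SetLike.mem_coe, RingHom.mem_ker]
      show φ (X 0 * X 1 - X 2 ^ N) = 0
      rw [map_sub, map_mul, map_pow, hφ]
      simp only [aeval_X, Matrix.cons_val_zero, Matrix.cons_val_one, Matrix.head_cons,
        Matrix.cons_val_two, Matrix.tail_cons]
      rw [← mul_pow, sub_self]
    exact this
  set Φ := Ideal.Quotient.liftₐ _ φ' hker with hΦdef
  have hΦ : ∀ p, Φ (Ideal.Quotient.mk _ p) = φ' p := by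
    intro p
    rw [hΦdef]
    rfl
  have hinj : Function.Injective Φ := by
    rw [injective_iff_map_eq_zero]
    intro a ha
    obtain ⟨p, rfl⟩ := Ideal.Quotient.mk_surjective a
    rw [hΦ] at ha
    have h0 : φ p = 0 := congrArg Subtype.val ha
    have := psi_phi N hN p
    rw [← this, hφ] at *
    rw [h0]
    rw [psi, AddMonoidAlgebra.coeff_zero]
    exact Finsupp.sum_zero_index
  have hsurj : Function.Surjective Φ := by
    rintro ⟨q, hq⟩
    rw [AlgHom.mem_equalizer] at hq
    obtain ⟨p, hp⟩ := inv_mem_range N hN ε hε q hq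
    exact ⟨Ideal.Quotient.mk _ p, Subtype.ext (by rw [hΦ]; exact hp)⟩
  refine ⟨AlgEquiv.ofBijective Φ ⟨hinj, hsurj⟩, ?_, ?_, ?_⟩ <;>
    · show ((Φ (Ideal.Quotient.mk _ _) : _) : MvPolynomial (Fin 2) ℂ) = _
      rw [hΦ]
      show φ _ = _
      simp [hφ]
end
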